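/- Acyclic induced subgraph in unidirected graphs (combinatorial core of Lemma 9 and Theorem 5): Let G be a directed graph on n ≥ 1 vertices whose edge relation is irreflexive and asymmetric (for every pair of vertices i, j, if there is an edge i → j then there is no edge j → i). Then there exists a subset S of vertices with |S| ≥ ⌊log₂ n⌋ such that the induced subgraph G|_S contains no directed cycle. -/

import Mathlib

/-- The induced subgraph `G|_S` contains no directed cycle: no vertex can reach itself
by a nonempty directed path staying inside `S`. -/
def NoDirectedCycle {V : Type*} (E : V → V → Prop) (S : Set V) : Prop :=
  ∀ v : V, ¬ Relation.TransGen (fun a b => a ∈ S ∧ b ∈ S ∧ E a b) v v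

/-- Key recursion: inside any finite vertex set `T` there is an "ordered" subset `S`
with `T.card < 2 ^ S.card`. -/
lemma key_lemma (n : ℕ) (E : Fin n → Fin n → Prop)
    (hirrefl : ∀ i : Fin n, ¬ E i i)
    (hasymm : ∀ i j : Fin n, E i j → ¬ E j i)
    (T : Finset (Fin n)) :
    ∃ S : Finset (Fin n), S ⊆ T ∧ T.card < 2 ^ S.card ∧
      ∃ f : Fin n → ℕ, ∀ a ∈ S, ∀ b ∈ S, E a b → f a < f b := by
  classical
  induction T using Finset.strongInductionOn with
  | _ T ih =>
    rcases T.eq_empty_or_nonempty with rfl | ⟨v, hv⟩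
    · exact ⟨∅, Finset.Subset.refl _, by simp, fun _ => 0, by simp⟩
    · set I := (T.erase v).filter (fun u => E u v) with hIdef
      set O := (T.erase v).filter (fun u => ¬ E u v) with hOdef
      have hcard : I.card + O.card = (T.erase v).card :=
        Finset.card_filter_add_card_filter_not _
      have herase : (T.erase v).card = T.card - 1 := Finset.card_erase_of_mem hv
      have hT1 : 1 ≤ T.card := Finset.card_pos.mpr ⟨v, hv⟩
      -- pick the larger of I, O as U
      rcases le_total I.card O.card with hle | hle
      · -- O is larger: v will be a source over the recursive set
        have hUsub : O ⊆ T.erase v := Finset.filter_subset _ _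
        have hUss : O ⊂ T := hUsub.trans_ssubset (Finset.erase_ssubset hv)
        obtain ⟨S', hS'sub, hS'card, f', hf'⟩ := ih O hUss
        have hvS' : v ∉ S' := fun h => Finset.notMem_erase v T (hUsub (hS'sub h))
        refine ⟨insert v S', ?_, ?_, ?_⟩
        · intro x hx
          rcases Finset.mem_insert.mp hx with rfl | hx
          · exact hv
          · exact Finset.mem_of_mem_erase (hUsub (hS'sub hx))
        · rw [Finset.card_insert_of_notMem hvS', pow_succ]
          have h1 : T.card ≤ 2 * O.card + 1 := by omega
          omega
        · refine ⟨fun a => if a = v then 0 else f' a + 1, ?_⟩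
          intro a ha b hb hab
          rcases Finset.mem_insert.mp ha with ha' | ha' <;>
            rcases Finset.mem_insert.mp hb with hb' | hb'
          · rw [ha', hb'] at hab; exact absurd hab (hirrefl v)
          · simp only [if_pos ha', if_neg (fun h : b = v => hvS' (h ▸ hb'))]; omega
          · rw [hb'] at hab; exact absurd hab ((Finset.mem_filter.mp (hS'sub ha')).2)
          · have h1 : a ≠ v := fun h => hvS' (h ▸ ha')
            have h2 : b ≠ v := fun h => hvS' (h ▸ hb')
            simp only [if_neg h1, if_neg h2]
            exact Nat.succ_lt_succ (hf' a ha' b hb' hab)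
      · -- I is larger: v will be a sink over the recursive set
        have hUsub : I ⊆ T.erase v := Finset.filter_subset _ _
        have hUss : I ⊂ T := hUsub.trans_ssubset (Finset.erase_ssubset hv)
        obtain ⟨S', hS'sub, hS'card, f', hf'⟩ := ih I hUss
        have hvS' : v ∉ S' := fun h => Finset.notMem_erase v T (hUsub (hS'sub h))
        refine ⟨insert v S', ?_, ?_, ?_⟩
        · intro x hx
          rcases Finset.mem_insert.mp hx with rfl | hx
          · exact hv
          · exact Finset.mem_of_mem_erase (hUsub (hS'sub hx))
        · rw [Finset.card_insert_of_notMem hvS', pow_succ]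
          have h1 : T.card ≤ 2 * I.card + 1 := by omega
          omega
        · refine ⟨fun a => if a = v then S'.sup f' + 1 else f' a, ?_⟩
          intro a ha b hb hab
          rcases Finset.mem_insert.mp ha with ha' | ha' <;>
            rcases Finset.mem_insert.mp hb with hb' | hb'
          · rw [ha', hb'] at hab; exact absurd hab (hirrefl v)
          · -- a = v, b ∈ S' : impossible since every u ∈ S' has E u v, asymmetry
            have heb : E b v := (Finset.mem_filter.mp (hS'sub hb')).2
            rw [ha'] at hab; exact absurd hab (hasymm b v heb)
          · have h1 : a ≠ v := fun h => hvS' (h ▸ ha')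
            simp only [if_neg h1, if_pos hb']
            exact Nat.lt_succ_of_le (Finset.le_sup ha')
          · have h1 : a ≠ v := fun h => hvS' (h ▸ ha')
            have h2 : b ≠ v := fun h => hvS' (h ▸ hb')
            simp only [if_neg h1, if_neg h2]
            exact hf' a ha' b hb' hab

/-- **Acyclic induced subgraph in unidirected graphs.**  If `G` is a directed graph on
`n ≥ 1` vertices whose edge relation is irreflexive and asymmetric (no bidirectional
edges), then some subset `S` of vertices with `|S| ≥ ⌊log₂ n⌋` induces an acyclic
subgraph. -/
theorem unidirected_acyclic_subset (n : ℕ) (hn : 1 ≤ n)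
    (E : Fin n → Fin n → Prop)
    (hirrefl : ∀ i : Fin n, ¬ E i i)
    (hasymm : ∀ i j : Fin n, E i j → ¬ E j i) :
    ∃ S : Finset (Fin n), Nat.log 2 n ≤ S.card ∧
      NoDirectedCycle E (S : Set (Fin n)) := by
  obtain ⟨S, _, hcard, f, hf⟩ := key_lemma n E hirrefl hasymm Finset.univ
  rw [Finset.card_univ, Fintype.card_fin] at hcard
  refine ⟨S, ?_, ?_⟩
  · have : Nat.log 2 n < S.card := Nat.log_lt_of_lt_pow (by omega) hcard
    omega
  · intro v hcyc
    have hsub : ∀ a b : Fin n,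
        (a ∈ (S : Set (Fin n)) ∧ b ∈ (S : Set (Fin n)) ∧ E a b) → f a < f b := by
      intro a b ⟨ha, hb, hab⟩
      exact hf a ha b hb hab
    have htg : Relation.TransGen (fun a b => f a < f b) v v := Relation.TransGen.mono hsub v v hcyc
    have htrans : Transitive (fun a b : Fin n => f a < f b) :=
      fun _ _ _ h1 h2 => lt_trans h1 h2
    rw [@Relation.transGen_eq_self _ (fun a b : Fin n => f a < f b) ⟨fun _ _ _ h1 h2 => htrans h1 h2⟩] at htg
    exact lt_irrefl _ htg
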